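/- (Riemann–Roch for a cycle) Let C_n be the cycle graph on n ≥ 3 vertices. Its canonical divisor is the zero divisor and its genus is 1, and for every divisor D on C_n one has r(D) − r(−D) = deg(D), where r denotes the rank of a divisor. -/

import Mathlib

open Finset

/-- The degree of a vertex of a simple graph: the number of its neighbors. -/
noncomputable def degS {V : Type*} (G : SimpleGraph V) (v : V) : ℕ :=
  {u | G.Adj v u}.ncard

open Classical in
/-- The Laplacian matrix of a simple graph `G`:
`L v v = deg v`, `L v w = -1` if `v w` is an edge, and `0` otherwise. -/
noncomputable def lapS {V : Type*} (G : SimpleGraph V) (v w : V) : ℤ :=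
  if v = w then (degS G v : ℤ) else if G.Adj v w then -1 else 0

/-- The Laplacian applied to a firing function `f`, evaluated at `v`. -/
noncomputable def lapApplyS {V : Type*} [Fintype V] (G : SimpleGraph V)
    (f : V → ℤ) (v : V) : ℤ :=
  ∑ w, lapS G v w * f w

/-- A divisor is winnable if it is linearly equivalent to an effective divisor. -/
def WinnableS {V : Type*} [Fintype V] (G : SimpleGraph V) (D : V → ℤ) : Prop :=
  ∃ f : V → ℤ, ∀ v, 0 ≤ D v - lapApplyS G f v

/-- The Baker–Norine rank of a divisor on a simple graph. -/
noncomputable def rankS {V : Type*} [Fintype V] (G : SimpleGraph V) (D : V → ℤ) : ℤ :=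
  sSup {r : ℤ | ∀ E : V → ℤ, (∀ v, 0 ≤ E v) → (∑ v, E v) = r →
    WinnableS G (fun v => D v - E v)}


namespace RRC
open SimpleGraph
open scoped Fin.CommRing Fin.NatCast

variable {m : ℕ}

lemma ne_add_one (v : Fin (m+3)) : v ≠ v + 1 := by simp

lemma sub_one_ne (v : Fin (m+3)) : v - 1 ≠ v := by
  intro h; have := sub_eq_iff_eq_add.mp h; simp [eq_comm, Fin.ext_iff] at this

lemma sub_one_ne_add_one (v : Fin (m+3)) : v - 1 ≠ v + 1 := by
  intro h
  have h2 : (2 : Fin (m+3)) = 0 := by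
    have : v + 1 - (v - 1) = 0 := by rw [← h]; ring
    rw [← this]; ring
  have := congrArg Fin.val h2
  simp [Fin.val_two, Nat.mod_eq_of_lt (show 2 < m + 3 by omega)] at this

lemma adj_iff (v w : Fin (m+3)) :
    (cycleGraph (m+3)).Adj v w ↔ w = v - 1 ∨ w = v + 1 := by
  rw [show (cycleGraph (m+3)).Adj v w ↔ v - w = 1 ∨ w - v = 1 from cycleGraph_adj (n := m+1)]
  constructor
  · rintro (h | h)
    · left; rw [← h]; ring
    · right; rw [← h]; ring
  · rintro (rfl | rfl)
    · left; ring
    · right; ring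

lemma degS_eq (v : Fin (m+3)) : degS (cycleGraph (m+3)) v = 2 := by
  have h1 : {u | (cycleGraph (m+3)).Adj v u} = {v - 1, v + 1} := by
    ext u; simp [adj_iff v u, Set.mem_insert_iff]
  rw [degS, h1, Set.ncard_pair (sub_one_ne_add_one v)]


lemma lap_formula (f : Fin (m+3) → ℤ) (v : Fin (m+3)) :
    lapApplyS (cycleGraph (m+3)) f v = 2 * f v - f (v - 1) - f (v + 1) := by
  classical
  have key : ∀ w, lapS (cycleGraph (m+3)) v w * f w =
      2 * (if w = v then f w else 0) - (if w = v - 1 then f w else 0)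
        - (if w = v + 1 then f w else 0) := by
    intro w
    unfold lapS
    by_cases h1 : v = w
    · subst h1
      rw [degS_eq, if_pos rfl, if_pos rfl, if_neg (sub_one_ne v).symm, if_neg (ne_add_one v)]
      ring
    · rw [if_neg h1, if_neg (Ne.symm h1)]
      by_cases h2 : w = v - 1
      · subst h2
        rw [if_pos ((adj_iff v _).mpr (Or.inl rfl)), if_pos rfl,
          if_neg (sub_one_ne_add_one v)]
        ring
      · by_cases h3 : w = v + 1
        · subst h3
          rw [if_pos ((adj_iff v _).mpr (Or.inr rfl)), if_neg h2, if_pos rfl]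
          ring
        · rw [if_neg (fun h => (((adj_iff v w).mp h).elim h2 h3)), if_neg h2, if_neg h3]
          ring
  unfold lapApplyS
  rw [Finset.sum_congr rfl (fun w _ => key w)]
  rw [Finset.sum_sub_distrib, Finset.sum_sub_distrib, ← Finset.mul_sum]
  simp [Finset.sum_ite_eq' Finset.univ]

lemma deg_lap (f : Fin (m+3) → ℤ) : ∑ v, lapApplyS (cycleGraph (m+3)) f v = 0 := by
  simp only [lap_formula]
  have e1 : ∑ x : Fin (m+3), f (x - 1) = ∑ x, f x := Equiv.sum_comp (Equiv.subRight 1) f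
  have e2 : ∑ x : Fin (m+3), f (x + 1) = ∑ x, f x := Equiv.sum_comp (Equiv.addRight 1) f
  rw [Finset.sum_sub_distrib, Finset.sum_sub_distrib, ← Finset.mul_sum, e1, e2]
  ring

def wsum (D : Fin (m+3) → ℤ) : ℤ := ∑ v, (v.val : ℤ) * D v

lemma wsum_lap (f : Fin (m+3) → ℤ) :
    ((m+3 : ℕ) : ℤ) ∣ wsum (fun v => lapApplyS (cycleGraph (m+3)) f v) := by
  unfold wsum
  simp only [lap_formula]
  have h1 : ∑ v : Fin (m+3), (v.val : ℤ) * f (v - 1)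
      = ∑ v : Fin (m+3), (((v+1 : Fin (m+3)).val : ℤ)) * f v := by
    exact (Equiv.sum_comp (Equiv.addRight (1 : Fin (m+3)))
      (fun v => ((v.val : ℤ)) * f (v - 1))).symm.trans (by simp)
  have h2 : ∑ v : Fin (m+3), (v.val : ℤ) * f (v + 1)
      = ∑ v : Fin (m+3), (((v-1 : Fin (m+3)).val : ℤ)) * f v := by
    exact (Equiv.sum_comp (Equiv.subRight (1 : Fin (m+3)))
      (fun v => ((v.val : ℤ)) * f (v + 1))).symm.trans (by simp)
  have lhs_eq : ∑ v : Fin (m+3), (v.val : ℤ) * (2 * f v - f (v - 1) - f (v + 1))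
      = 2 * (∑ v : Fin (m+3), (v.val : ℤ) * f v) - (∑ v : Fin (m+3), ((v+1 : Fin (m+3)).val : ℤ) * f v)
        - (∑ v : Fin (m+3), ((v-1 : Fin (m+3)).val : ℤ) * f v) := by
    rw [Finset.sum_congr rfl (fun v _ => (by ring :
      (v.val : ℤ) * (2 * f v - f (v - 1) - f (v + 1))
        = 2 * ((v.val : ℤ) * f v) - (v.val : ℤ) * f (v - 1) - (v.val : ℤ) * f (v + 1)))]
    rw [Finset.sum_sub_distrib, Finset.sum_sub_distrib, ← Finset.mul_sum, h1, h2]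
  have rhs_eq : ∑ v : Fin (m+3),
        (2 * (v.val : ℤ) - ((v+1 : Fin (m+3)).val : ℤ) - ((v-1 : Fin (m+3)).val : ℤ)) * f v
      = 2 * (∑ v : Fin (m+3), (v.val : ℤ) * f v) - (∑ v : Fin (m+3), ((v+1 : Fin (m+3)).val : ℤ) * f v)
        - (∑ v : Fin (m+3), ((v-1 : Fin (m+3)).val : ℤ) * f v) := by
    rw [Finset.sum_congr rfl (fun v _ => (by ring :
      (2 * (v.val : ℤ) - ((v+1 : Fin (m+3)).val : ℤ) - ((v-1 : Fin (m+3)).val : ℤ)) * f v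
        = 2 * ((v.val : ℤ) * f v) - ((v+1 : Fin (m+3)).val : ℤ) * f v - ((v-1 : Fin (m+3)).val : ℤ) * f v))]
    rw [Finset.sum_sub_distrib, Finset.sum_sub_distrib, ← Finset.mul_sum]
  rw [lhs_eq, ← rhs_eq]
  apply Finset.dvd_sum
  intro v _
  apply Dvd.dvd.mul_right
  have hv1 : ((v + 1 : Fin (m+3)).val) = (v.val + 1) % (m+3) := by
    rw [Fin.add_def, Fin.val_one]
  have hv2 : ((v - 1 : Fin (m+3)).val) = (m + 2 + v.val) % (m+3) := by
    rw [Fin.sub_def]; simp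
  have hlt := v.isLt
  rcases Nat.eq_zero_or_pos v.val with h0 | h0
  · have e1 : (v.val + 1) % (m+3) = v.val + 1 := Nat.mod_eq_of_lt (by omega)
    have e2 : (m + 2 + v.val) % (m+3) = m + 2 := by
      rw [h0, Nat.mod_eq_of_lt (by omega)]
    refine ⟨-1, ?_⟩
    rw [hv1, hv2, e1, e2, h0]; push_cast; ring
  · rcases Nat.lt_or_ge (v.val + 1) (m+3) with h | h
    · have e1 : (v.val + 1) % (m+3) = v.val + 1 := Nat.mod_eq_of_lt h
      have e2 : (m + 2 + v.val) % (m+3) = v.val - 1 := by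
        rw [show m + 2 + v.val = (v.val - 1) + (m+3) by omega, Nat.add_mod_right,
          Nat.mod_eq_of_lt (by omega)]
      refine ⟨0, ?_⟩
      rw [hv1, hv2, e1, e2]
      have : ((v.val - 1 : ℕ) : ℤ) = (v.val : ℤ) - 1 := by omega
      rw [this]; push_cast; ring
    · have hv : v.val = m + 2 := by omega
      have e1 : (v.val + 1) % (m+3) = 0 := by
        rw [hv, show m + 2 + 1 = m + 3 from rfl, Nat.mod_self]
      have e2 : (m + 2 + v.val) % (m+3) = m + 1 := by
        rw [hv, show m + 2 + (m+2) = (m+1) + (m+3) by ring, Nat.add_mod_right,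
          Nat.mod_eq_of_lt (by omega)]
      refine ⟨1, ?_⟩
      rw [hv1, hv2, e1, e2, hv]; push_cast; ring

-- generic ℕ helper lemmas
lemma window {n : ℕ} (g : ℕ → ℤ) (hg : ∀ k, g (k + n) = g k) :
    ∀ c, ∑ j ∈ range n, g (c + j) = ∑ j ∈ range n, g j := by
  intro c
  induction c with
  | zero => simp
  | succ c ih =>
    have h1 : ∑ j ∈ range n, g (c + 1 + j) = ∑ j ∈ range n, g (c + (j + 1)) := by
      exact Finset.sum_congr rfl (fun j _ => by ring_nf)
    have h2 : ∑ j ∈ range (n+1), g (c + j) = ∑ j ∈ range n, g (c + (j+1)) + g (c + 0) :=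
      Finset.sum_range_succ' (fun j => g (c + j)) n
    have h3 : ∑ j ∈ range (n+1), g (c + j) = ∑ j ∈ range n, g (c + j) + g (c + n) :=
      Finset.sum_range_succ (fun j => g (c + j)) n
    rw [h1]
    have : ∑ j ∈ range n, g (c + (j+1)) = ∑ j ∈ range n, g (c + j) + g (c + n) - g (c + 0) := by
      omega
    rw [this, hg c, add_zero]
    omega

lemma dsum (g : ℕ → ℤ) : ∀ N, ∑ k ∈ range N, ∑ j ∈ range k, g j
    = ∑ j ∈ range N, ((N - (j+1) : ℕ) : ℤ) * g j := by
  intro N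
  induction N with
  | zero => simp
  | succ N ih =>
    rw [Finset.sum_range_succ, ih, Finset.sum_range_succ]
    have : ((N + 1 - (N+1) : ℕ) : ℤ) = 0 := by norm_num
    rw [this, zero_mul, add_zero]
    rw [← Finset.sum_add_distrib]
    refine Finset.sum_congr rfl (fun j hj => ?_)
    have hj' : j < N := Finset.mem_range.mp hj
    have : ((N + 1 - (j+1) : ℕ) : ℤ) = ((N - (j+1) : ℕ) : ℤ) + 1 := by omega
    rw [this]; ring


def Pfun (g : ℕ → ℤ) (c : ℕ) : ℤ := ∑ j ∈ Finset.range c, g (j+1)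
def Afun (g : ℕ → ℤ) (a : ℤ) (t : ℕ) : ℤ := t * a - ∑ k ∈ Finset.range t, Pfun g k

lemma Afun_rec (g : ℕ → ℤ) (a : ℤ) (t : ℕ) :
    2 * Afun g a (t+1) - Afun g a t - Afun g a (t+2) = g (t+1) := by
  simp [Afun, Pfun, Finset.sum_range_succ]
  push_cast
  ring


lemma exists_fire (D : Fin (m+3) → ℤ) (h0 : ∑ v, D v = 0)
    (h1 : ((m+3 : ℕ) : ℤ) ∣ wsum D) :
    ∃ f : Fin (m+3) → ℤ, ∀ v, lapApplyS (cycleGraph (m+3)) f v = D v := by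
  obtain ⟨k, hk⟩ := h1
  set Dn : ℕ → ℤ := fun i => D (i : Fin (m+3)) with hDn
  have hDn_per : ∀ i, Dn (i + (m+3)) = Dn i := by
    intro i; simp [hDn]
  have hDval : ∀ v : Fin (m+3), Dn v.val = D v := by
    intro v; simp [hDn, Fin.cast_val_eq_self]
  have hDsum : ∑ i ∈ range (m+3), Dn i = 0 := by
    rw [← Fin.sum_univ_eq_sum_range (fun i => Dn i) (m+3)]
    rw [Finset.sum_congr rfl (fun v _ => hDval v)]
    exact h0
  have hwsum : ∑ i ∈ range (m+3), (i : ℤ) * Dn i = ((m+3 : ℕ) : ℤ) * k := by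
    rw [← Fin.sum_univ_eq_sum_range (fun i => (i : ℤ) * Dn i) (m+3)]
    rw [Finset.sum_congr rfl (fun v _ => by rw [hDval v])]
    exact hk
  set a : ℤ := -(k + Dn 0) with ha
  set A : ℕ → ℤ := Afun Dn a with hA
  -- window sums of Dn vanish
  have hDw : ∀ c, ∑ j ∈ range (m+3), Dn (c + j) = 0 := by
    intro c; rw [window Dn hDn_per c, hDsum]
  -- P is periodic
  have hP : ∀ c, Pfun Dn (c + (m+3)) = Pfun Dn c := by
    intro c
    show ∑ j ∈ range (c + (m+3)), Dn (j+1) = ∑ j ∈ range c, Dn (j+1)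
    rw [Finset.sum_range_add (fun j => Dn (j+1)) c (m+3)]
    have : ∑ j ∈ range (m+3), Dn (c + j + 1) = ∑ j ∈ range (m+3), Dn ((c+1) + j) :=
      Finset.sum_congr rfl (fun j _ => by ring_nf)
    rw [this, hDw (c+1)]
    ring
  -- sum of P over a full period
  have hsumP : ∑ t ∈ range (m+3), Pfun Dn t = ((m+3 : ℕ) : ℤ) * a := by
    have e0 : ∑ t ∈ range (m+3), Pfun Dn t
        = ∑ k ∈ range (m+3), ∑ j ∈ range k, Dn (j+1) := rfl
    rw [e0, dsum (fun j => Dn (j+1)) (m+3)]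
    set F : ℕ → ℤ := fun i => ((m+3-i : ℕ) : ℤ) * Dn i with hF
    have e1 : ∑ j ∈ range (m+3), ((m+3 - (j+1) : ℕ) : ℤ) * Dn (j+1)
        = ∑ j ∈ range (m+3), F (j+1) := rfl
    have e2 : ∑ i ∈ range (m+4), F i = ∑ i ∈ range (m+3), F (i+1) + F 0 :=
      Finset.sum_range_succ' F (m+3)
    have e3 : ∑ i ∈ range (m+4), F i = ∑ i ∈ range (m+3), F i + F (m+3) :=
      Finset.sum_range_succ F (m+3)
    have e4 : F (m+3) = 0 := by simp [hF]
    have e5 : F 0 = ((m+3 : ℕ) : ℤ) * Dn 0 := by simp [hF]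
    have e6 : ∑ i ∈ range (m+3), F i = - ((m+3 : ℕ) : ℤ) * k := by
      have : ∀ i ∈ range (m+3), F i = ((m+3 : ℕ) : ℤ) * Dn i - (i : ℤ) * Dn i := by
        intro i hi
        have hi' : i < m + 3 := Finset.mem_range.mp hi
        have : ((m+3-i : ℕ) : ℤ) = ((m+3 : ℕ) : ℤ) - (i : ℤ) := by omega
        simp only [hF, this]; ring
      rw [Finset.sum_congr rfl this, Finset.sum_sub_distrib, ← Finset.mul_sum, hDsum, hwsum]
      ring
    rw [e1]
    have : ∑ j ∈ range (m+3), F (j+1) = ∑ i ∈ range (m+3), F i + F (m+3) - F 0 := by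
      omega
    rw [this, e4, e5, e6, ha]
    ring
  have hAn : A (m+3) = 0 := by
    show Afun Dn a (m+3) = 0
    unfold Afun
    rw [show ∑ k ∈ Finset.range (m+3), Pfun Dn k = ((m+3:ℕ):ℤ) * a from hsumP]
    ring
  have hAper : ∀ t, A (t + (m+3)) = A t := by
    intro t
    show Afun Dn a (t + (m+3)) = Afun Dn a t
    unfold Afun
    rw [Finset.sum_range_add (Pfun Dn) t (m+3), window (Pfun Dn) hP t, hsumP]
    push_cast
    ring
  have hAmod : ∀ t, A (t % (m+3)) = A t := by
    have aux : ∀ q r, A (r + (m+3) * q) = A r := by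
      intro q
      induction q with
      | zero => simp
      | succ q ih =>
        intro r
        have : r + (m+3) * (q+1) = (r + (m+3) * q) + (m+3) := by ring
        rw [this, hAper, ih]
    intro t
    conv_rhs => rw [← Nat.mod_add_div t (m+3)]
    exact (aux (t / (m+3)) (t % (m+3))).symm
  refine ⟨fun v => A v.val, fun v => ?_⟩
  rw [lap_formula]
  have hv1 : (v + 1 : Fin (m+3)).val = (v.val + 1) % (m+3) := by
    rw [Fin.add_def, Fin.val_one]
  have hv2 : (v - 1 : Fin (m+3)).val = (v.val + (m + 2)) % (m+3) := by
    rw [Fin.sub_def]; simp [Nat.add_comm]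
  have key := Afun_rec Dn a (v.val + m + 2)
  have k1 : A (v.val + m + 2 + 1) = A v.val := by
    rw [show v.val + m + 2 + 1 = v.val + (m+3) by ring, hAper]
  have k2 : A (v.val + m + 2 + 2) = A (v.val + 1) := by
    rw [show v.val + m + 2 + 2 = (v.val + 1) + (m+3) by ring, hAper]
  have k3 : Dn (v.val + m + 2 + 1) = D v := by
    rw [show v.val + m + 2 + 1 = v.val + (m+3) by ring, hDn_per, hDval]
  have e1 : A ((v + 1 : Fin (m+3)).val) = A (v.val + 1) := by
    rw [hv1, hAmod]
  have e2 : A ((v - 1 : Fin (m+3)).val) = A (v.val + (m+2)) := by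
    rw [hv2, hAmod]
  rw [← hA] at key
  have k4 : A (v.val + m + 2) = A (v.val + (m + 2)) := by
    rw [show v.val + m + 2 = v.val + (m+2) from by ring]
  show 2 * A v.val - A ((v - 1 : Fin (m+3)).val) - A ((v + 1 : Fin (m+3)).val) = D v
  rw [e1, e2]
  linarith [key, k1, k2, k3, k4]

lemma wsum_sub (D E : Fin (m+3) → ℤ) :
    wsum (fun v => D v - E v) = wsum D - wsum E := by
  unfold wsum
  rw [← Finset.sum_sub_distrib]
  exact Finset.sum_congr rfl (fun v _ => by ring)

lemma single_sum (c : ℤ) (v₀ : Fin (m+3)) :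
    ∑ u : Fin (m+3), c * (if u = v₀ then 1 else 0) = c := by
  simp [Finset.sum_ite_eq']

lemma single_wsum (c : ℤ) (v₀ : Fin (m+3)) :
    wsum (fun u => c * (if u = v₀ then 1 else 0)) = c * v₀.val := by
  unfold wsum
  have : ∀ u : Fin (m+3), (u.val : ℤ) * (c * (if u = v₀ then 1 else 0))
      = (if u = v₀ then c * (v₀.val : ℤ) else 0) := by
    intro u
    by_cases h : u = v₀ <;> simp [h] <;> ring
  rw [Finset.sum_congr rfl (fun u _ => this u)]
  simp [Finset.sum_ite_eq']

lemma winnable_iff (D : Fin (m+3) → ℤ) :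
    WinnableS (cycleGraph (m+3)) D ↔
      (1 ≤ ∑ v, D v) ∨ (∑ v, D v = 0 ∧ ((m+3 : ℕ) : ℤ) ∣ wsum D) := by
  constructor
  · rintro ⟨f, hf⟩
    have hdeg : ∑ v, (D v - lapApplyS (cycleGraph (m+3)) f v) = ∑ v, D v := by
      rw [Finset.sum_sub_distrib, deg_lap]; ring
    have hnn : 0 ≤ ∑ v, D v := hdeg ▸ Finset.sum_nonneg (fun v _ => hf v)
    rcases lt_or_eq_of_le hnn with h | h
    · exact Or.inl h
    · refine Or.inr ⟨h.symm, ?_⟩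
      have hz : ∀ v ∈ Finset.univ, D v - lapApplyS (cycleGraph (m+3)) f v = 0 := by
        rw [← Finset.sum_eq_zero_iff_of_nonneg (fun v _ => hf v)]
        rw [hdeg, ← h]
      have hDv : ∀ v, D v = lapApplyS (cycleGraph (m+3)) f v := by
        intro v; have := hz v (Finset.mem_univ v); linarith
      have : wsum D = wsum (fun v => lapApplyS (cycleGraph (m+3)) f v) := by
        unfold wsum; exact Finset.sum_congr rfl (fun v _ => by rw [hDv v])
      rw [this]; exact wsum_lap f
  · rintro (h | ⟨h0, h1⟩)
    · -- positive degree case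
      set d : ℤ := ∑ v, D v with hd
      set E : Fin (m+3) → ℤ := fun u => D u - (d-1) * (if u = 0 then 1 else 0) with hE
      have hsE : ∑ u, E u = 1 := by
        rw [hE]
        simp only []
        rw [Finset.sum_sub_distrib, single_sum (d-1) 0, ← hd]
        ring
      set s : ℤ := wsum E with hs
      have hnpos : (0 : ℤ) < ((m+3 : ℕ) : ℤ) := by positivity
      have hm1 : 0 ≤ s % ((m+3 : ℕ) : ℤ) := Int.emod_nonneg s (ne_of_gt hnpos)
      have hm2 : s % ((m+3 : ℕ) : ℤ) < ((m+3 : ℕ) : ℤ) := Int.emod_lt_of_pos s hnpos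
      have hvlt : (s % ((m+3 : ℕ) : ℤ)).toNat < m + 3 := by omega
      set v : Fin (m+3) := ⟨(s % ((m+3 : ℕ) : ℤ)).toNat, hvlt⟩ with hv
      have hvval : (v.val : ℤ) = s % ((m+3 : ℕ) : ℤ) := by
        exact Int.toNat_of_nonneg hm1
      set E' : Fin (m+3) → ℤ := fun u => E u - (if u = v then 1 else 0) with hE'
      have hsE' : ∑ u, E' u = 0 := by
        rw [hE']
        simp only []
        rw [Finset.sum_sub_distrib, hsE]
        have : ∑ u : Fin (m+3), (if u = v then (1:ℤ) else 0)
            = ∑ u : Fin (m+3), (1:ℤ) * (if u = v then 1 else 0) := by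
          exact Finset.sum_congr rfl (fun u _ => by ring)
        rw [this, single_sum 1 v]
        ring
      have hwE' : ((m+3 : ℕ) : ℤ) ∣ wsum E' := by
        have : wsum E' = wsum E - 1 * (v.val : ℤ) := by
          rw [hE']
          have : (fun u => E u - (if u = v then 1 else 0))
              = (fun u => E u - 1 * (if u = v then 1 else 0)) := by
            funext u; ring
          rw [this, wsum_sub E _, single_wsum 1 v]
        rw [this, hvval, ← hs]
        refine ⟨s / ((m+3:ℕ):ℤ), ?_⟩
        have := Int.mul_ediv_add_emod s ((m+3:ℕ):ℤ)
        linarith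
      obtain ⟨f, hf⟩ := exists_fire E' hsE' hwE'
      refine ⟨f, fun u => ?_⟩
      rw [hf u, hE', hE]
      simp only []
      by_cases h1 : u = 0 <;> by_cases h2 : u = v <;> simp [h1, h2] <;>
        first | linarith | (split_ifs <;> linarith)
    · obtain ⟨f, hf⟩ := exists_fire D h0 h1
      exact ⟨f, fun v => by rw [hf v]; simp⟩


-- the defining set of the rank
def S (D : Fin (m+3) → ℤ) : Set ℤ :=
  {r : ℤ | ∀ E : Fin (m+3) → ℤ, (∀ v, 0 ≤ E v) → (∑ v, E v) = r →
    WinnableS (cycleGraph (m+3)) (fun v => D v - E v)}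

lemma rankS_eq_sSup (D : Fin (m+3) → ℤ) : rankS (cycleGraph (m+3)) D = sSup (S D) := rfl

lemma neg_mem_S (D : Fin (m+3) → ℤ) (r : ℤ) (hr : r < 0) : r ∈ S D := by
  intro E hE hsum
  exfalso
  have : 0 ≤ ∑ v, E v := Finset.sum_nonneg (fun v _ => hE v)
  omega

lemma rank_eq (D : Fin (m+3) → ℤ) (ρ : ℤ) (hmem : ρ ∈ S D)
    (hub : ∀ r ∈ S D, r ≤ ρ) : rankS (cycleGraph (m+3)) D = ρ := by
  rw [rankS_eq_sSup]
  exact le_antisymm (csSup_le ⟨ρ, hmem⟩ hub) (le_csSup ⟨ρ, hub⟩ hmem)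

-- effective divisor r·δ₀
lemma ub_helper (D : Fin (m+3) → ℤ) (r : ℤ) (hr : 0 ≤ r) (hrS : r ∈ S D) :
    WinnableS (cycleGraph (m+3)) (fun v => D v - r * (if v = 0 then 1 else 0)) := by
  apply hrS
  · intro v; by_cases h : v = 0 <;> simp [h] <;> omega
  · exact single_sum r 0

lemma deg_of_win_helper (D : Fin (m+3) → ℤ) (r : ℤ) (hr : 0 ≤ r) (hrS : r ∈ S D) :
    1 ≤ ∑ v, D v - r ∨ (∑ v, D v - r = 0 ∧
      ((m+3 : ℕ) : ℤ) ∣ wsum (fun v => D v - r * (if v = 0 then 1 else 0))) := by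
  have h := (winnable_iff _).mp (ub_helper D r hr hrS)
  have hsum : ∑ v, (D v - r * (if v = 0 then 1 else 0)) = ∑ v, D v - r := by
    rw [Finset.sum_sub_distrib, single_sum r 0]
  rw [hsum] at h
  exact h

lemma rank_of_neg_deg (D : Fin (m+3) → ℤ) (hd : ∑ v, D v < 0) :
    rankS (cycleGraph (m+3)) D = -1 := by
  apply rank_eq D (-1) (neg_mem_S D (-1) (by norm_num))
  intro r hr
  by_contra hcon
  push_neg at hcon
  have hr0 : 0 ≤ r := by omega
  rcases deg_of_win_helper D r hr0 hr with h | ⟨h, _⟩ <;> omega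

lemma rank_of_zero_dvd (D : Fin (m+3) → ℤ) (hd : ∑ v, D v = 0)
    (hdvd : ((m+3 : ℕ) : ℤ) ∣ wsum D) : rankS (cycleGraph (m+3)) D = 0 := by
  apply rank_eq D 0
  · intro E hE hsum
    have hzero : ∀ v ∈ Finset.univ, E v = 0 :=
      (Finset.sum_eq_zero_iff_of_nonneg (fun v _ => hE v)).mp hsum
    apply (winnable_iff _).mpr
    right
    constructor
    · rw [Finset.sum_sub_distrib, hsum, hd]; ring
    · rw [wsum_sub]
      have : wsum E = 0 := by
        unfold wsum
        exact Finset.sum_eq_zero (fun v hv => by rw [hzero v (Finset.mem_univ v)]; ring)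
      rw [this, sub_zero]
      exact hdvd
  · intro r hr
    by_contra hcon
    push_neg at hcon
    have hr0 : 0 ≤ r := by omega
    rcases deg_of_win_helper D r hr0 hr with h | ⟨h, _⟩ <;> omega

lemma rank_of_zero_ndvd (D : Fin (m+3) → ℤ) (hd : ∑ v, D v = 0)
    (hdvd : ¬ ((m+3 : ℕ) : ℤ) ∣ wsum D) : rankS (cycleGraph (m+3)) D = -1 := by
  apply rank_eq D (-1) (neg_mem_S D (-1) (by norm_num))
  intro r hr
  by_contra hcon
  push_neg at hcon
  have hr0 : 0 ≤ r := by omega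
  rcases deg_of_win_helper D r hr0 hr with h | ⟨h, hw⟩
  · omega
  · have hr0' : r = 0 := by omega
    subst hr0'
    apply hdvd
    have : wsum (fun v => D v - 0 * (if v = 0 then 1 else 0)) = wsum D := by
      unfold wsum
      exact Finset.sum_congr rfl (fun v _ => by ring_nf)
    rwa [this] at hw

lemma rank_of_pos_deg (D : Fin (m+3) → ℤ) (hd : 1 ≤ ∑ v, D v) :
    rankS (cycleGraph (m+3)) D = (∑ v, D v) - 1 := by
  set d := ∑ v, D v with hdd
  apply rank_eq D (d - 1)
  · intro E hE hsum
    apply (winnable_iff _).mpr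
    left
    rw [Finset.sum_sub_distrib, hsum]
    omega
  · intro r hr
    by_contra hcon
    push_neg at hcon
    have hr0 : 0 ≤ r := by omega
    rcases deg_of_win_helper D r hr0 hr with h | ⟨h, _⟩
    · omega
    · -- r = d : construct bad effective divisor
      have hrd : r = d := by omega
      subst hrd
      -- choose vertex v₀ with wsum D - (d-1)*0 - v₀ not divisible
      set s : ℤ := wsum D - (d-1) * 0 with hs
      have hnpos : (0 : ℤ) < ((m+3 : ℕ) : ℤ) := by positivity
      have hm1 : 0 ≤ wsum D % ((m+3:ℕ):ℤ) := Int.emod_nonneg _ (ne_of_gt hnpos)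
      have hm2 : wsum D % ((m+3:ℕ):ℤ) < ((m+3:ℕ):ℤ) := Int.emod_lt_of_pos _ hnpos
      set w : ℕ := (wsum D % ((m+3:ℕ):ℤ)).toNat with hw
      have hwval : (w : ℤ) = wsum D % ((m+3:ℕ):ℤ) := Int.toNat_of_nonneg hm1
      set v₀ : Fin (m+3) := ⟨(w + 1) % (m+3), Nat.mod_lt _ (by omega)⟩ with hv₀
      -- the bad divisor
      set E : Fin (m+3) → ℤ :=
        fun u => (d-1) * (if u = 0 then 1 else 0) + (if u = v₀ then 1 else 0) with hE
      have hEeff : ∀ u, 0 ≤ E u := by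
        intro u
        rw [hE]
        by_cases h1 : u = 0 <;> by_cases h2 : u = v₀ <;> simp [h1, h2] <;>
          first | omega | (split_ifs <;> omega)
      have hEsum : ∑ u, E u = d := by
        rw [hE]
        simp only []
        rw [Finset.sum_add_distrib, single_sum (d-1) 0]
        have : ∑ u : Fin (m+3), (if u = v₀ then (1:ℤ) else 0)
            = ∑ u : Fin (m+3), (1:ℤ) * (if u = v₀ then 1 else 0) :=
          Finset.sum_congr rfl (fun u _ => by ring)
        rw [this, single_sum 1 v₀]
        ring
      have hwin := hr E hEeff hEsum
      have hdegDE : ∑ u, (D u - E u) = 0 := by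
        rw [Finset.sum_sub_distrib, hEsum]; omega
      rcases (winnable_iff _).mp hwin with hcc | ⟨_, hdvd⟩
      · omega
      · -- divisibility contradiction
        have hwE : wsum E = (d-1) * 0 + (v₀.val : ℤ) := by
          rw [hE]
          have : (fun u => (d-1) * (if u = 0 then 1 else 0) + (if u = v₀ then 1 else 0))
              = (fun u => (d-1) * (if u = 0 then 1 else 0) + 1 * (if u = v₀ then 1 else 0)) := by
            funext u; ring
          rw [this]
          unfold wsum
          rw [Finset.sum_congr rfl (fun u _ => (by ring :
            (u.val : ℤ) * ((d-1) * (if u = 0 then 1 else 0) + 1 * (if u = v₀ then 1 else 0))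
              = (u.val : ℤ) * ((d-1) * (if u = 0 then 1 else 0))
                + (u.val : ℤ) * (1 * (if u = v₀ then 1 else 0)))), Finset.sum_add_distrib]
          have e1 := single_wsum (m := m) (d-1) 0
          have e2 := single_wsum (m := m) 1 v₀
          unfold wsum at e1 e2
          rw [e1, e2]
          simp
        rw [wsum_sub, hwE] at hdvd
        -- now: (m+3) ∣ wsum D - v₀.val, with v₀.val ≡ w + 1 mod (m+3)
        have hv₀val : (v₀.val : ℤ) = ((w + 1) % (m+3) : ℕ) := by rw [hv₀]
        obtain ⟨c, hc⟩ := hdvd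
        -- derive contradiction
        set N : ℤ := ((m+3:ℕ):ℤ) with hN
        have hN3 : N = (m:ℤ) + 3 := by rw [hN]; push_cast; ring
        set q : ℤ := wsum D / N with hqdef
        have hq : wsum D = N * q + (w : ℤ) := by
          rw [hwval, hqdef]; exact (Int.mul_ediv_add_emod _ _).symm
        rcases Nat.lt_or_ge (w + 1) (m+3) with hlt | hge
        · have hveq : (v₀.val : ℤ) = (w : ℤ) + 1 := by
            rw [hv₀val, Nat.mod_eq_of_lt hlt]; push_cast; ring
          rw [hveq] at hc
          have key : N * (q - c) = 1 := by rw [mul_sub]; linarith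
          have hle := Int.le_of_dvd one_pos ⟨q - c, key.symm⟩
          linarith
        · have hweq : w = m + 2 := by omega
          have hveq : (v₀.val : ℤ) = 0 := by
            rw [hv₀val, hweq, show m + 2 + 1 = m + 3 from rfl, Nat.mod_self]
            norm_num
          rw [hveq] at hc
          have hwZ : (w : ℤ) = (m:ℤ) + 2 := by rw [hweq]; push_cast; ring
          have key : N * (c - q) = (m:ℤ) + 2 := by rw [mul_sub]; linarith
          have hle := Int.le_of_dvd (by positivity) ⟨c - q, key.symm⟩
          linarith

end RRC

/-- **Riemann–Roch for a cycle.**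
For the cycle graph `C n` on `n ≥ 3` vertices: the canonical divisor `K v = deg v - 2`
is the zero divisor, the genus `|E| - |V| + 1` is `1`, and for every divisor `D`,
`r(D) - r(-D) = deg D`. -/
theorem riemann_roch_for_cycle (n : ℕ) (hn : 3 ≤ n) :
    (∀ v : Fin n, (degS (SimpleGraph.cycleGraph n) v : ℤ) - 2 = 0) ∧
    (((SimpleGraph.cycleGraph n).edgeSet.ncard : ℤ) - (n : ℤ) + 1 = 1) ∧
    (∀ D : Fin n → ℤ,
      rankS (SimpleGraph.cycleGraph n) D - rankS (SimpleGraph.cycleGraph n) (fun v => -D v)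
        = ∑ v, D v) := by
  obtain ⟨m, rfl⟩ : ∃ m, n = m + 3 := ⟨n - 3, by omega⟩
  open SimpleGraph in
  refine ⟨fun v => by rw [RRC.degS_eq v]; norm_num, ?_, ?_⟩
  ·
    classical
    have hcard : (cycleGraph (m+3)).edgeFinset.card = m + 3 := by
      have hsum : ∑ v : Fin (m+3), (cycleGraph (m+3)).degree v = 2 * (cycleGraph (m+3)).edgeFinset.card :=
        SimpleGraph.sum_degrees_eq_twice_card_edges _
      have hdeg : ∀ v : Fin (m+3), (cycleGraph (m+3)).degree v = 2 := fun v =>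
        cycleGraph_degree_three_le
      rw [Finset.sum_congr rfl (fun v _ => hdeg v), Finset.sum_const, Finset.card_univ,
        Fintype.card_fin, smul_eq_mul] at hsum
      omega
    have : (cycleGraph (m+3)).edgeSet.ncard = (cycleGraph (m+3)).edgeFinset.card := by
      rw [← SimpleGraph.coe_edgeFinset, Set.ncard_coe_finset]
    rw [this, hcard]
    push_cast
    ring

  · intro D
    rcases lt_trichotomy (∑ v, D v) 0 with h | h | h
    · have hneg : 1 ≤ ∑ v : Fin (m+3), (fun v => -D v) v := by
        simp only [Finset.sum_neg_distrib]; omega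
      rw [RRC.rank_of_neg_deg D h, RRC.rank_of_pos_deg (fun v => -D v) hneg]
      simp only [Finset.sum_neg_distrib]
      ring
    · have hneg0 : ∑ v : Fin (m+3), (fun v => -D v) v = 0 := by
        simp only [Finset.sum_neg_distrib]; omega
      have hw : RRC.wsum (fun v => -D v) = - RRC.wsum D := by
        unfold RRC.wsum
        rw [← Finset.sum_neg_distrib]
        exact Finset.sum_congr rfl (fun v _ => by ring)
      by_cases hdvd : ((m+3 : ℕ) : ℤ) ∣ RRC.wsum D
      · rw [RRC.rank_of_zero_dvd D h hdvd,
          RRC.rank_of_zero_dvd (fun v => -D v) hneg0 (by rw [hw]; exact hdvd.neg_right)]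
        omega
      · rw [RRC.rank_of_zero_ndvd D h hdvd,
          RRC.rank_of_zero_ndvd (fun v => -D v) hneg0
            (by rw [hw]; exact fun hc => hdvd ((dvd_neg).mp hc))]
        omega
    · have hneg : ∑ v : Fin (m+3), (fun v => -D v) v < 0 := by
        simp only [Finset.sum_neg_distrib]; omega
      rw [RRC.rank_of_pos_deg D h, RRC.rank_of_neg_deg (fun v => -D v) hneg]
      ring
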